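/- Suppose n = 2ℓ, δ_ℓ = 1 (split case) and set z := 1 + j in K_ℓ, so z² = 2z. If char F ≠ 2, then every idempotent p ∈ K_ℓ \ {0,1} satisfies κ(p) = 1 − p, and the right K_ℓ-module W := Λ^ℓ V decomposes as the direct sum W = Wp ⊕ W(1−p) of SU(V,h)-submodules. -/

import Mathlib

open ExteriorAlgebra

/-- The wedge product of a family of vectors in the exterior algebra. -/
noncomputable def wedgeFam (F : Type*) {V : Type*} [Field F] [AddCommGroup V] [Module F V]
    {k : ℕ} (u : Fin k → V) : ExteriorAlgebra F V :=
  (List.ofFn fun i => ExteriorAlgebra.ι F (u i)).prod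

/-- The element `x₀ + j·x₁` of the algebra `K_ℓ`, realized as the 2×2 matrix
`[[x₀, δ·σ(x₁)], [x₁, σ(x₀)]]` over `F`; here `δ = 1` (split case). -/
def Kmk {F : Type*} [Field F] (σ : F → F) (δ x0 x1 : F) : Matrix (Fin 2) (Fin 2) F :=
  !![x0, δ * σ x1; x1, σ x0]

lemma wedgeFam_eq_ιMulti {F V : Type*} [Field F] [AddCommGroup V] [Module F V]
    {k : ℕ} (u : Fin k → V) : wedgeFam F u = ιMulti F k u := rfl

lemma aux_map_mem {F V : Type*} [Field F] [AddCommGroup V] [Module F V]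
    (f : V →ₗ[F] V) (k : ℕ) (x : ExteriorAlgebra F V) (hx : x ∈ ⋀[F]^k V) :
    ExteriorAlgebra.map f x ∈ ⋀[F]^k V := by
  rw [← ιMulti_span_fixedDegree] at hx
  induction hx using Submodule.span_induction with
  | mem y hy =>
      obtain ⟨u, rfl⟩ := hy
      rw [map_apply_ιMulti]
      exact ιMulti_range F k (Set.mem_range_self _)
  | zero => simp
  | add a c _ _ ha hc => rw [map_add]; exact Submodule.add_mem _ ha hc
  | smul s a _ ha => rw [map_smul]; exact Submodule.smul_mem _ _ ha

lemma aux_span {F V : Type*} [Field F] [AddCommGroup V] [Module F V] (n ℓ : ℕ)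
    (v : Module.Basis (Fin n) F V) :
    (⋀[F]^ℓ V : Submodule F (ExteriorAlgebra F V)) ≤ Submodule.span F
      (Set.range fun S : {S : Finset (Fin n) // S.card = ℓ} =>
        ExteriorAlgebra.ιMulti F ℓ (fun i => v (S.1.orderEmbOfFin S.2 i))) := by
  rw [← ιMulti_span_fixedDegree, Submodule.span_le]
  rintro _ ⟨u, rfl⟩
  have hu : (ιMulti F ℓ u : ExteriorAlgebra F V) =
      ∑ s : Fin ℓ → Fin n, (∏ i, v.repr (u i) (s i)) • ιMulti F ℓ (fun i => v (s i)) := by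
    calc (ιMulti F ℓ) u = (ιMulti F ℓ) (fun i => ∑ j, v.repr (u i) j • v j) := by
          congr 1; funext i; exact (v.sum_repr (u i)).symm
      _ = ∑ s : Fin ℓ → Fin n, (ιMulti F ℓ) (fun i => v.repr (u i) (s i) • v (s i)) :=
          (ιMulti F ℓ).toMultilinearMap.map_sum (g := fun i j => v.repr (u i) j • v j)
      _ = ∑ s : Fin ℓ → Fin n, (∏ i, v.repr (u i) (s i)) • ιMulti F ℓ (fun i => v (s i)) := by
          refine Finset.sum_congr rfl fun s _ => ?_
          exact (ιMulti F ℓ).toMultilinearMap.map_smul_univ _ _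
  rw [hu]
  refine Submodule.sum_mem _ fun s _ => Submodule.smul_mem _ _ ?_
  by_cases hinj : Function.Injective s
  · set S : Finset (Fin n) := Finset.univ.image s with hS
    have hcard : S.card = ℓ := by
      rw [hS, Finset.card_image_of_injective _ hinj, Finset.card_univ, Fintype.card_fin]
    have hmem : ∀ i, s i ∈ S := fun i => Finset.mem_image_of_mem s (Finset.mem_univ i)
    have hbij : Function.Bijective (fun i => (⟨s i, hmem i⟩ : {x // x ∈ S})) := by
      refine (Fintype.bijective_iff_injective_and_card _).mpr
        ⟨fun i j hij => hinj (congrArg Subtype.val hij), ?_⟩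
      rw [Fintype.card_coe, hcard, Fintype.card_fin]
    set π : Equiv.Perm (Fin ℓ) :=
      (Equiv.ofBijective _ hbij).trans (S.orderIsoOfFin hcard).toEquiv.symm with hπ
    have hcomp : (fun i => v (S.orderEmbOfFin hcard i)) ∘ π = fun i => v (s i) := by
      funext i
      have : S.orderEmbOfFin hcard (π i) = s i := by
        rw [← Finset.coe_orderIsoOfFin_apply]
        simp [hπ]
      simp [Function.comp, this]
    have hperm := (ιMulti F ℓ).map_perm (fun i => v (S.orderEmbOfFin hcard i)) π
    rw [hcomp] at hperm
    rw [hperm]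
    have hmem2 : (ιMulti F ℓ) (fun i => v (S.orderEmbOfFin hcard i)) ∈ Submodule.span F
        (Set.range fun S : {S : Finset (Fin n) // S.card = ℓ} =>
          ExteriorAlgebra.ιMulti F ℓ (fun i => v (S.1.orderEmbOfFin S.2 i))) :=
      Submodule.subset_span ⟨⟨S, hcard⟩, rfl⟩
    rcases Int.units_eq_one_or (Equiv.Perm.sign π) with h | h <;> rw [h]
    · simpa using hmem2
    · rw [Units.smul_def]
      simpa using Submodule.neg_mem _ hmem2
  · obtain ⟨i, j, hij, hne⟩ := Function.not_injective_iff.mp hinj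
    rw [(ιMulti F ℓ).map_eq_zero_of_eq _ (show v (s i) = v (s j) by rw [hij]) hne]
    exact Submodule.zero_mem _

lemma aux_nondeg {F V : Type*} [Field F] [AddCommGroup V] [Module F V] [FiniteDimensional F V]
    (n ℓ : ℕ) (σ : F ≃+* F)
    (h : V → V → F)
    (h_add_right : ∀ u w w', h u (w + w') = h u w + h u w')
    (h_smul_right : ∀ (s : F) u w, h u (s • w) = s * h u w)
    (h_nondeg : ∀ u, (∀ w, h u w = 0) → u = 0)
    (v : Module.Basis (Fin n) F V)
    (h_orth : ∀ i j, i ≠ j → h (v i) (v j) = 0)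
    (H : ExteriorAlgebra F V → ExteriorAlgebra F V → F)
    (H_add_left : ∀ x x' y, H (x + x') y = H x y + H x' y)
    (H_smul_left : ∀ (s : F) x y, H (s • x) y = σ s * H x y)
    (H_det : ∀ (k : ℕ) (u w : Fin k → V),
      H (wedgeFam F u) (wedgeFam F w) = Matrix.det (Matrix.of fun i j => h (u i) (w j)))
    (x : ExteriorAlgebra F V) (hx : x ∈ ⋀[F]^ℓ V)
    (hzero : ∀ y ∈ ⋀[F]^ℓ V, H x y = 0) : x = 0 := by
  classical
  -- diagonal entries of h are nonzero
  have hvv : ∀ k, h (v k) (v k) ≠ 0 := by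
    intro k hk
    refine absurd (h_nondeg (v k) fun w => ?_) (v.ne_zero k)
    have hw : w = ∑ j, v.repr w j • v j := (v.sum_repr w).symm
    have hsum : (∑ j, h (v k) (v.repr w j • v j)) = h (v k) w := by
      conv_rhs => rw [hw]
      exact (map_sum (AddMonoidHom.mk' (h (v k)) (h_add_right (v k))) _ _).symm
    rw [← hsum]
    refine Finset.sum_eq_zero fun j _ => ?_
    rw [h_smul_right]
    rcases eq_or_ne k j with rfl | hne
    · rw [hk, mul_zero]
    · rw [h_orth k j hne, mul_zero]
  -- the wedge family indexed by subsets
  set wS : {S : Finset (Fin n) // S.card = ℓ} → ExteriorAlgebra F V :=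
    fun S => ExteriorAlgebra.ιMulti F ℓ (fun i => v (S.1.orderEmbOfFin S.2 i)) with hwS
  have hwSmem : ∀ S, wS S ∈ ⋀[F]^ℓ V := fun S => ιMulti_range F ℓ (Set.mem_range_self _)
  -- pairing values
  have hpair_off : ∀ S T : {S : Finset (Fin n) // S.card = ℓ}, S ≠ T → H (wS S) (wS T) = 0 := by
    intro S T hST
    rw [hwS]
    simp only
    rw [← wedgeFam_eq_ιMulti, ← wedgeFam_eq_ιMulti, H_det]
    have hnsub : ¬ S.1 ⊆ T.1 := fun hsub =>
      hST (Subtype.ext (Finset.eq_of_subset_of_card_le hsub (le_of_eq (T.2.trans S.2.symm))))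
    obtain ⟨a, haS, haT⟩ := Finset.not_subset.mp hnsub
    refine Matrix.det_eq_zero_of_row_eq_zero ((S.1.orderIsoOfFin S.2).symm ⟨a, haS⟩) fun j => ?_
    have ha : S.1.orderEmbOfFin S.2 ((S.1.orderIsoOfFin S.2).symm ⟨a, haS⟩) = a := by
      rw [← Finset.coe_orderIsoOfFin_apply, OrderIso.apply_symm_apply]
    show h (v (S.1.orderEmbOfFin S.2 _)) (v (T.1.orderEmbOfFin T.2 j)) = 0
    rw [ha]
    exact h_orth _ _ (fun hEq => haT (hEq ▸ Finset.orderEmbOfFin_mem T.1 T.2 j))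
  have hpair_diag : ∀ S : {S : Finset (Fin n) // S.card = ℓ},
      H (wS S) (wS S) = ∏ i, h (v (S.1.orderEmbOfFin S.2 i)) (v (S.1.orderEmbOfFin S.2 i)) := by
    intro S
    rw [hwS]
    simp only
    rw [← wedgeFam_eq_ιMulti, H_det]
    have : (Matrix.of fun i j => h (v (S.1.orderEmbOfFin S.2 i)) (v (S.1.orderEmbOfFin S.2 j)))
        = Matrix.diagonal (fun i => h (v (S.1.orderEmbOfFin S.2 i)) (v (S.1.orderEmbOfFin S.2 i))) := by
      ext i j
      rcases eq_or_ne i j with rfl | hne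
      · simp
      · rw [Matrix.diagonal_apply_ne _ hne]
        exact h_orth _ _ fun hEq => hne ((S.1.orderEmbOfFin S.2).injective hEq)
    rw [this, Matrix.det_diagonal]
  -- expand x over the wedge family
  obtain ⟨c, hc⟩ := (Submodule.mem_span_range_iff_exists_fun F).mp (aux_span n ℓ v hx)
  have hcz : ∀ T, c T = 0 := by
    intro T
    have h0 := hzero (wS T) (hwSmem T)
    rw [← hc] at h0
    have h0' : (∑ S : {S : Finset (Fin n) // S.card = ℓ}, H (c S • wS S) (wS T)) = 0 := by
      rw [← h0]
      exact (map_sum (AddMonoidHom.mk' (fun z => H z (wS T))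
        (fun a b => H_add_left a b (wS T))) (fun S => c S • wS S) Finset.univ).symm
    rw [Finset.sum_eq_single_of_mem T (Finset.mem_univ T)
      (fun S _ hST => by rw [H_smul_left, hpair_off S T hST, mul_zero])] at h0'
    replace h0 : σ (c T) * H (wS T) (wS T) = 0 := by
      rw [← H_smul_left]; exact h0'
    rw [hpair_diag] at h0
    have hne : (∏ i, h (v (T.1.orderEmbOfFin T.2 i)) (v (T.1.orderEmbOfFin T.2 i))) ≠ 0 :=
      Finset.prod_ne_zero_iff.mpr fun i _ => hvv _
    have : σ (c T) = 0 := by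
      rcases mul_eq_zero.mp h0 with hh | hh
      · exact hh
      · exact absurd hh hne
    have := congrArg σ.symm this
    rwa [RingEquiv.symm_apply_apply, map_zero] at this
  rw [← hc]
  exact Finset.sum_eq_zero fun S _ => by rw [hcz S, zero_smul]

lemma aux_b_inv {F V : Type*} [Field F] [AddCommGroup V] [Module F V]
    (n : ℕ) (v : Module.Basis (Fin n) F V)
    (b : ExteriorAlgebra F V →ₗ[F] F)
    (g : V →ₗ[F] V) (hdet : LinearMap.det g = 1)
    (z : ExteriorAlgebra F V) (hz : z ∈ ⋀[F]^n V) :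
    b (ExteriorAlgebra.map g z) = b z := by
  rw [← ιMulti_span_fixedDegree] at hz
  induction hz using Submodule.span_induction with
  | mem z' hz' =>
      obtain ⟨u, rfl⟩ := hz'
      set f : V [⋀^Fin n]→ₗ[F] F := b.compAlternatingMap (ιMulti F n) with hfdef
      have hf := f.eq_smul_basis_det v
      have h1 : b (ExteriorAlgebra.map g (ιMulti F n u)) = f (g ∘ u) := by
        rw [map_apply_ιMulti]; rfl
      have h2 : b (ιMulti F n u) = f u := rfl
      rw [h1, h2, hf]
      simp only [AlternatingMap.smul_apply, smul_eq_mul]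
      rw [Module.Basis.det_comp, hdet, one_mul]
  | zero => simp
  | add a c _ _ ha hc => rw [map_add, map_add, map_add, ha, hc]
  | smul s a _ ha => rw [map_smul, map_smul, map_smul, ha]

lemma aux_H_inv {F V : Type*} [Field F] [AddCommGroup V] [Module F V]
    (ℓ : ℕ) (σ : F ≃+* F)
    (h : V → V → F)
    (H : ExteriorAlgebra F V → ExteriorAlgebra F V → F)
    (H_add_left : ∀ x x' y, H (x + x') y = H x y + H x' y)
    (H_add_right : ∀ x y y', H x (y + y') = H x y + H x y')
    (H_smul_left : ∀ (s : F) x y, H (s • x) y = σ s * H x y)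
    (H_smul_right : ∀ (s : F) x y, H x (s • y) = s * H x y)
    (H_det : ∀ (k : ℕ) (u w : Fin k → V),
      H (wedgeFam F u) (wedgeFam F w) = Matrix.det (Matrix.of fun i j => h (u i) (w j)))
    (g : V →ₗ[F] V) (hg : ∀ u w : V, h (g u) (g w) = h u w)
    (x : ExteriorAlgebra F V) (hx : x ∈ ⋀[F]^ℓ V) :
    ∀ y ∈ ⋀[F]^ℓ V, H (ExteriorAlgebra.map g x) (ExteriorAlgebra.map g y) = H x y := by
  have hH0l : ∀ y, H 0 y = 0 := by
    intro y
    have := H_add_left 0 0 y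
    rw [add_zero] at this
    exact (left_eq_add.mp this)
  have hH0r : ∀ x, H x 0 = 0 := by
    intro x
    have := H_add_right x 0 0
    rw [add_zero] at this
    exact (left_eq_add.mp this)
  rw [← ιMulti_span_fixedDegree] at hx
  induction hx using Submodule.span_induction with
  | mem x' hx' =>
      obtain ⟨u, rfl⟩ := hx'
      intro y hy
      rw [← ιMulti_span_fixedDegree] at hy
      induction hy using Submodule.span_induction with
      | mem y' hy' =>
          obtain ⟨w, rfl⟩ := hy'
          rw [map_apply_ιMulti, map_apply_ιMulti, ← wedgeFam_eq_ιMulti, ← wedgeFam_eq_ιMulti,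
            ← wedgeFam_eq_ιMulti u, ← wedgeFam_eq_ιMulti w, H_det, H_det]
          congr 1
          ext i j
          exact hg (u i) (w j)
      | zero => rw [map_zero, hH0r, hH0r]
      | add a c _ _ ha hc => rw [map_add, H_add_right, H_add_right, ha, hc]
      | smul s a _ ha => rw [map_smul, H_smul_right, H_smul_right, ha]
  | zero => intro y hy; rw [map_zero, hH0l, hH0l]
  | add a c _ _ ha hc => intro y hy; rw [map_add, H_add_left, H_add_left, ha y hy, hc y hy]
  | smul s a _ ha => intro y hy; rw [map_smul, H_smul_left, H_smul_left, ha y hy]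

/-- in the split case (`n = 2ℓ`, `δ_ℓ = 1`, so `J² = id`) with
`char F ≠ 2`, every idempotent `p = x₀ + j x₁ ∈ K_ℓ \ {0,1}` satisfies
`κ(p) = 1 − p`, and `W = Λ^ℓ V` decomposes as `W = W·p ⊕ W·(1−p)`, a direct sum of
`SU(V,h)`-submodules.  The right action of `y₀ + j y₁ ∈ K_ℓ` on `w ∈ W` is
`w·(y₀ + j y₁) = y₀ • w + y₁ • J w`. -/
theorem split_idempotent_decomposition
    {F V : Type*} [Field F] [AddCommGroup V] [Module F V] [FiniteDimensional F V]
    (hchar : ringChar F ≠ 2)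
    (n ℓ : ℕ) (hfr : Module.finrank F V = n) (hn2 : n = 2 * ℓ)
    (σ : F ≃+* F) (hσ : ∀ a, σ (σ a) = a)
    (h : V → V → F)
    (h_add_left : ∀ u u' w, h (u + u') w = h u w + h u' w)
    (h_add_right : ∀ u w w', h u (w + w') = h u w + h u w')
    (h_smul_left : ∀ (s : F) u w, h (s • u) w = σ s * h u w)
    (h_smul_right : ∀ (s : F) u w, h u (s • w) = s * h u w)
    (h_herm : ∀ u w, h w u = σ (h u w))
    (h_nondeg : ∀ u, (∀ w, h u w = 0) → u = 0)
    (v : Module.Basis (Fin n) F V)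
    (h_orth : ∀ i j, i ≠ j → h (v i) (v j) = 0)
    (H : ExteriorAlgebra F V → ExteriorAlgebra F V → F)
    (H_add_left : ∀ x x' y, H (x + x') y = H x y + H x' y)
    (H_add_right : ∀ x y y', H x (y + y') = H x y + H x y')
    (H_smul_left : ∀ (s : F) x y, H (s • x) y = σ s * H x y)
    (H_smul_right : ∀ (s : F) x y, H x (s • y) = s * H x y)
    (H_det : ∀ (k : ℕ) (u w : Fin k → V),
      H (wedgeFam F u) (wedgeFam F w) = Matrix.det (Matrix.of fun i j => h (u i) (w j)))
    (H_cross : ∀ (k m : ℕ), k ≠ m → ∀ x ∈ ⋀[F]^k V, ∀ y ∈ ⋀[F]^m V, H x y = 0)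
    (b : ExteriorAlgebra F V →ₗ[F] F)
    (hb_inj : ∀ z ∈ ⋀[F]^n V, b z = 0 → z = 0)
    (hb_off : ∀ (k : ℕ), k ≠ n → ∀ z ∈ ⋀[F]^k V, b z = 0)
    (J : ExteriorAlgebra F V → ExteriorAlgebra F V)
    (hJ_mem : ∀ x ∈ ⋀[F]^ℓ V, J x ∈ ⋀[F]^ℓ V)
    (hJ_char : ∀ x ∈ ⋀[F]^ℓ V, ∀ y ∈ ⋀[F]^ℓ V, b (J x * y) = H x y)
    (hJ_add : ∀ x y, J (x + y) = J x + J y)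
    (hJ_smul : ∀ (s : F) x, J (s • x) = σ s • J x)
    -- normalization: b is chosen so that J² = id (δ_ℓ = 1)
    (hJsq : ∀ x ∈ ⋀[F]^ℓ V, J (J x) = x)
    -- p = x₀ + j x₁ is an idempotent of K_ℓ different from 0 and 1
    (x0 x1 : F)
    (hidem : Kmk ⇑σ 1 x0 x1 * Kmk ⇑σ 1 x0 x1 = Kmk ⇑σ 1 x0 x1)
    (hp0 : Kmk ⇑σ 1 x0 x1 ≠ 0) (hp1 : Kmk ⇑σ 1 x0 x1 ≠ 1) :
    -- κ(p) = 1 − p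
    Kmk ⇑σ 1 (σ x0) (-x1) = 1 - Kmk ⇑σ 1 x0 x1 ∧
    -- W = W·p + W·(1−p) …
    (∀ w ∈ ⋀[F]^ℓ V, ∃ a ∈ ⋀[F]^ℓ V, ∃ c ∈ ⋀[F]^ℓ V,
        w = (x0 • a + x1 • J a) + ((1 - x0) • c + (-x1) • J c)) ∧
    -- … and the sum is direct
    (∀ a ∈ ⋀[F]^ℓ V, ∀ c ∈ ⋀[F]^ℓ V,
        x0 • a + x1 • J a = (1 - x0) • c + (-x1) • J c → x0 • a + x1 • J a = 0) ∧
    -- both summands are SU(V,h)-submodules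
    (∀ (g : V ≃ₗ[F] V), (∀ u w : V, h (g u) (g w) = h u w) →
        LinearMap.det (g : V →ₗ[F] V) = 1 →
        (∀ a ∈ ⋀[F]^ℓ V, ∃ a' ∈ ⋀[F]^ℓ V,
          ExteriorAlgebra.map (g : V →ₗ[F] V) (x0 • a + x1 • J a)
            = x0 • a' + x1 • J a') ∧
        (∀ c ∈ ⋀[F]^ℓ V, ∃ c' ∈ ⋀[F]^ℓ V,
          ExteriorAlgebra.map (g : V →ₗ[F] V) ((1 - x0) • c + (-x1) • J c)
            = (1 - x0) • c' + (-x1) • J c')) := by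
  classical
  -- scalar identities from idempotency
  rw [Kmk, Matrix.mul_fin_two] at hidem
  have h00 : x0 * x0 + σ x1 * x1 = x0 := by
    have := congrFun (congrFun hidem 0) 0; simpa using this
  have h10 : x1 * x0 + σ x0 * x1 = x1 := by
    have := congrFun (congrFun hidem 1) 0; simpa using this
  have hx1 : x1 ≠ 0 := by
    intro hz
    subst hz
    rw [map_zero, mul_zero, add_zero] at h00
    have : x0 = 0 ∨ x0 = 1 := by
      rcases mul_eq_zero.mp (show x0 * (x0 - 1) = 0 by ring_nf; linear_combination h00) with hh | hh
      · exact Or.inl hh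
      · exact Or.inr (sub_eq_zero.mp hh)
    rcases this with hh | hh <;> subst hh
    · exact hp0 (by ext i j; fin_cases i <;> fin_cases j <;> simp [Kmk])
    · exact hp1 (by rw [Kmk, Matrix.one_fin_two]; norm_num)
  have key1 : σ x0 = 1 - x0 := by
    have hcan : x1 * (x0 + σ x0) = x1 * 1 := by ring_nf; linear_combination h10
    have := mul_left_cancel₀ hx1 hcan
    linear_combination this
  have key2 : σ x1 * x1 = x0 - x0 * x0 := by linear_combination h00
  have hJ0 : J 0 = 0 := by
    have := hJ_add 0 0
    rw [add_zero] at this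
    exact (left_eq_add.mp this)
  refine ⟨?_, ?_, ?_, ?_⟩
  · -- κ(p) = 1 - p
    rw [Kmk, Kmk, Matrix.one_fin_two]
    ext i j
    fin_cases i <;> fin_cases j <;> simp [key1, hσ, map_neg] <;> ring
  · -- W = W·p + W·(1-p)
    intro w hw
    refine ⟨w, hw, w, hw, ?_⟩
    module
  · -- directness
    intro a ha c hc hyp
    have e1 : J (x0 • a + x1 • J a) = σ x0 • J a + σ x1 • a := by
      rw [hJ_add, hJ_smul, hJ_smul, hJsq a ha]
    have e2 : J ((1 - x0) • c + (-x1) • J c) = σ (1 - x0) • J c + σ (-x1) • c := by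
      rw [hJ_add, hJ_smul, hJ_smul, hJsq c hc]
    have hT := congrArg (fun w => x0 • w + x1 • J w) hyp
    rw [e1, e2, map_sub, map_one, map_neg, key1] at hT
    have keyA : x0 • (x0 • a + x1 • J a) + x1 • ((1 - x0) • J a + σ x1 • a)
        = x0 • a + x1 • J a := by
      match_scalars
      · linear_combination key2
      · ring
    have keyC : x0 • ((1 - x0) • c + (-x1) • J c) + x1 • ((1 - (1 - x0)) • J c + (-σ x1) • c)
        = 0 := by
      match_scalars
      · linear_combination -key2
      · ring
    rw [keyA, keyC] at hT
    exact hT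
  · -- SU-invariance
    intro g hg hdet
    have hcomp : (g : V →ₗ[F] V) ∘ₗ (g.symm : V →ₗ[F] V) = LinearMap.id := by
      ext x; simp
    have hmapinv : ∀ x, ExteriorAlgebra.map (g : V →ₗ[F] V)
        (ExteriorAlgebra.map (g.symm : V →ₗ[F] V) x) = x := by
      intro x
      have h2 : (ExteriorAlgebra.map (g : V →ₗ[F] V)).comp
          (ExteriorAlgebra.map (g.symm : V →ₗ[F] V)) = AlgHom.id F _ := by
        rw [ExteriorAlgebra.map_comp_map, hcomp, ExteriorAlgebra.map_id]
      have h3 := DFunLike.congr_fun h2 x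
      rw [AlgHom.comp_apply, AlgHom.id_apply] at h3
      exact h3
    have hJcomm : ∀ x ∈ ⋀[F]^ℓ V, ExteriorAlgebra.map (g : V →ₗ[F] V) (J x)
        = J (ExteriorAlgebra.map (g : V →ₗ[F] V) x) := by
      intro x hx
      set gm : V →ₗ[F] V := (g : V →ₗ[F] V) with hgm
      have hmx : ExteriorAlgebra.map gm x ∈ ⋀[F]^ℓ V := aux_map_mem gm ℓ x hx
      set d : ExteriorAlgebra F V :=
        ExteriorAlgebra.map gm (J x) - J (ExteriorAlgebra.map gm x) with hddef
      have hd : d ∈ ⋀[F]^ℓ V :=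
        Submodule.sub_mem _ (aux_map_mem gm ℓ _ (hJ_mem x hx)) (hJ_mem _ hmx)
      have hbzero : ∀ y ∈ ⋀[F]^ℓ V, b (d * y) = 0 := by
        intro y hy
        have hy' : ExteriorAlgebra.map (g.symm : V →ₗ[F] V) y ∈ ⋀[F]^ℓ V :=
          aux_map_mem _ ℓ y hy
        have hmul : J x * ExteriorAlgebra.map (g.symm : V →ₗ[F] V) y ∈ ⋀[F]^n V := by
          have := SetLike.mul_mem_graded (hJ_mem x hx) hy'
          have hnn : n = ℓ + ℓ := by omega
          rw [hnn]; exact this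
        have e1 : b (J (ExteriorAlgebra.map gm x) * y) = H (ExteriorAlgebra.map gm x) y :=
          hJ_char _ hmx y hy
        have e2 : b (ExteriorAlgebra.map gm (J x) * y) = H (ExteriorAlgebra.map gm x) y := by
          calc b (ExteriorAlgebra.map gm (J x) * y)
              = b (ExteriorAlgebra.map gm (J x) *
                  ExteriorAlgebra.map gm (ExteriorAlgebra.map (g.symm : V →ₗ[F] V) y)) := by
                rw [hmapinv y]
            _ = b (ExteriorAlgebra.map gm (J x * ExteriorAlgebra.map (g.symm : V →ₗ[F] V) y)) :=
                congrArg b (map_mul (ExteriorAlgebra.map gm) _ _).symm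
            _ = b (J x * ExteriorAlgebra.map (g.symm : V →ₗ[F] V) y) :=
                aux_b_inv n v b gm hdet _ hmul
            _ = H x (ExteriorAlgebra.map (g.symm : V →ₗ[F] V) y) := hJ_char x hx _ hy'
            _ = H (ExteriorAlgebra.map gm x)
                  (ExteriorAlgebra.map gm (ExteriorAlgebra.map (g.symm : V →ₗ[F] V) y)) :=
                (aux_H_inv ℓ σ h H H_add_left H_add_right H_smul_left H_smul_right H_det
                  gm hg x hx _ hy').symm
            _ = H (ExteriorAlgebra.map gm x) y := by rw [hmapinv y]
        rw [hddef, sub_mul, map_sub, e2, e1, sub_self]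
      have hJd0 : ∀ y ∈ ⋀[F]^ℓ V, H (J d) y = 0 := by
        intro y hy
        rw [← hJ_char (J d) (hJ_mem d hd) y hy, hJsq d hd]
        exact hbzero y hy
      have hJdz : J d = 0 :=
        aux_nondeg n ℓ σ h h_add_right h_smul_right h_nondeg v h_orth
          H H_add_left H_smul_left H_det (J d) (hJ_mem d hd) hJd0
      have hd0 : d = 0 := by rw [← hJsq d hd, hJdz, hJ0]
      exact sub_eq_zero.mp hd0
    constructor
    · intro a ha
      refine ⟨ExteriorAlgebra.map (g : V →ₗ[F] V) a, aux_map_mem _ ℓ a ha, ?_⟩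
      rw [map_add, map_smul, map_smul, hJcomm a ha]
    · intro c hc
      refine ⟨ExteriorAlgebra.map (g : V →ₗ[F] V) c, aux_map_mem _ ℓ c hc, ?_⟩
      rw [map_add, map_smul, map_smul, hJcomm c hc]
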